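/- The coefficients μ_n satisfy: μ_0 = 1, μ_1 = Q/([ν+1]_q [ν+2]_q), and for every n ≥ 2, Q^{−1}·[ν+1]_q·[ν+n+1]_q·μ_n = ∑_{k=2}^{n−1} Q q^k μ_{k−1} μ_{n−k} + (1 + Q q^n) μ_{n−1} in K. -/

import Mathlib

/- Let `K` be the fraction field of `ℚ[q,Q]`, where `Q` plays the role of `q^ν`.
`θν` and `θν1` are the series `θ_ν` and `θ_{ν+1}` of the Hahn–Exton `q`-Bessel
functions, and `μ n` are the coefficients of `θ_{ν+1}/θ_ν`. -/

noncomputable section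

abbrev K : Type := FractionRing (MvPolynomial (Fin 2) ℚ)

def qv : K := algebraMap (MvPolynomial (Fin 2) ℚ) K (MvPolynomial.X 0)

def Qv : K := algebraMap (MvPolynomial (Fin 2) ℚ) K (MvPolynomial.X 1)

/-- The q-Pochhammer symbol `(a;q)_n`. -/
def qPoch (a : K) (n : ℕ) : K := ∏ j ∈ Finset.range n, (1 - a * qv ^ j)

/-- `[ν+k]_q = (1 - Q q^k)/(1-q)`. -/
def brk (k : ℕ) : K := (1 - Qv * qv ^ k) / (1 - qv)

/-- `[ν]_q = (1 - Q)/(1-q)`. -/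
def brNu : K := (1 - Qv) / (1 - qv)

/-- `θ_ν(x)`. -/
def θν : PowerSeries K :=
  PowerSeries.mk fun n =>
    (-1) ^ n * qv ^ (n * (n - 1) / 2) * Qv ^ n * (1 - qv) ^ (2 * n)
      / (qPoch qv n * qPoch (Qv * qv) n)

/-- `θ_{ν+1}(x)`, i.e. `θ_ν` with `Q` replaced by `Qq`. -/
def θν1 : PowerSeries K :=
  PowerSeries.mk fun n =>
    (-1) ^ n * qv ^ (n * (n - 1) / 2) * (Qv * qv) ^ n * (1 - qv) ^ (2 * n)
      / (qPoch qv n * qPoch (Qv * qv ^ 2) n)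

/-- The coefficients `μ_n` of `θ_{ν+1}(x)/θ_ν(x)`. -/
def μ (n : ℕ) : K := PowerSeries.coeff n (θν1 * θν⁻¹)

open PowerSeries Finset

lemma alg_ne_zero {p : MvPolynomial (Fin 2) ℚ} (v : Fin 2 → ℚ)
    (hp : MvPolynomial.eval v p ≠ 0) :
    algebraMap (MvPolynomial (Fin 2) ℚ) K p ≠ 0 := by
  intro h
  have hinj := IsFractionRing.injective (MvPolynomial (Fin 2) ℚ) K
  have : p = 0 := hinj (by simpa using h)
  simp [this] at hp

lemma one_sub_q_pow_ne (k : ℕ) (hk : k ≠ 0) : (1 : K) - qv ^ k ≠ 0 := by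
  have h : (1 : K) - qv ^ k
      = algebraMap (MvPolynomial (Fin 2) ℚ) K (1 - MvPolynomial.X 0 ^ k) := by
    simp [qv, map_sub, map_pow]
  rw [h]
  exact alg_ne_zero (fun _ => 0) (by simp [zero_pow hk])

lemma one_sub_Qq_ne (k : ℕ) : (1 : K) - Qv * qv ^ k ≠ 0 := by
  have h : (1 : K) - Qv * qv ^ k
      = algebraMap (MvPolynomial (Fin 2) ℚ) K (1 - MvPolynomial.X 1 * MvPolynomial.X 0 ^ k) := by
    simp [qv, Qv, map_sub, map_pow, map_mul]
  rw [h]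
  exact alg_ne_zero (fun _ => 0) (by simp)

lemma Qv_ne : (Qv : K) ≠ 0 :=
  alg_ne_zero (fun _ => 1) (by simp)

lemma one_sub_qv_ne : (1 : K) - qv ≠ 0 := by
  simpa using one_sub_q_pow_ne 1 one_ne_zero

lemma qPoch_q_ne (n : ℕ) : qPoch qv n ≠ 0 := by
  refine Finset.prod_ne_zero_iff.mpr fun j _ => ?_
  have := one_sub_q_pow_ne (j + 1) j.succ_ne_zero
  simpa [pow_succ'] using this

lemma qPoch_Qq_ne (n : ℕ) : qPoch (Qv * qv) n ≠ 0 := by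
  refine Finset.prod_ne_zero_iff.mpr fun j _ => ?_
  have := one_sub_Qq_ne (j + 1)
  simpa [pow_succ', mul_assoc] using this

lemma qPoch_Qq2_ne (n : ℕ) : qPoch (Qv * qv ^ 2) n ≠ 0 := by
  refine Finset.prod_ne_zero_iff.mpr fun j _ => ?_
  have h := one_sub_Qq_ne (j + 2)
  have e : (1:K) - Qv * qv ^ 2 * qv ^ j = 1 - Qv * qv ^ (j + 2) := by ring
  rw [e]; exact h

lemma poch_q_succ (n : ℕ) : qPoch qv (n + 1) = qPoch qv n * (1 - qv * qv ^ n) :=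
  Finset.prod_range_succ _ _

lemma poch_shift_succ (n : ℕ) :
    qPoch (Qv * qv) (n + 1) = (1 - Qv * qv) * qPoch (Qv * qv ^ 2) n := by
  rw [qPoch, Finset.prod_range_succ', qPoch, mul_comm]
  congr 1
  · simp
  · exact Finset.prod_congr rfl fun i _ => by ring_nf

lemma poch_shift (n : ℕ) :
    qPoch (Qv * qv) n * (1 - Qv * qv * qv ^ n) = (1 - Qv * qv) * qPoch (Qv * qv ^ 2) n := by
  have h1 : qPoch (Qv * qv) (n + 1) = qPoch (Qv * qv) n * (1 - Qv * qv * qv ^ n) :=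
    Finset.prod_range_succ _ _
  rw [← h1, poch_shift_succ]

lemma tri (n : ℕ) : (n + 1) * ((n + 1) - 1) / 2 = n * (n - 1) / 2 + n := by
  cases n with
  | zero => rfl
  | succ m =>
    have h : (m + 1 + 1) * (m + 1) = (m + 1) * m + (m + 1) * 2 := by ring
    simp only [Nat.add_sub_cancel, h, Nat.succ_sub_one]
    rw [Nat.add_mul_div_right _ _ (by norm_num : 0 < 2)]

lemma hI : rescale qv θν
    = θν + PowerSeries.C (Qv * (1 - qv) ^ 2 / (1 - Qv * qv)) * (PowerSeries.X * θν1) := by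
  ext n
  cases n with
  | zero =>
    simp [coeff_rescale, coeff_zero_eq_constantCoeff_apply, map_mul]
  | succ n =>
    simp only [coeff_rescale, map_add, coeff_C_mul, coeff_succ_X_mul, θν, θν1, coeff_mk]
    rw [show (n + 1) * ((n + 1) - 1) / 2 = n * (n - 1) / 2 + n from tri n]
    rw [poch_q_succ n, poch_shift_succ n]
    rw [pow_add, pow_succ (-1 : K) n, pow_succ Qv n,
      show 2 * (n + 1) = 2 * n + 2 from by ring, pow_add]
    have h1 := qPoch_q_ne n
    have h3 := qPoch_Qq2_ne n
    have h4 : (1 : K) - qv * qv ^ n ≠ 0 := by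
      have := one_sub_q_pow_ne (n + 1) n.succ_ne_zero
      simpa [pow_succ'] using this
    have h5 := one_sub_Qq_ne 1
    rw [pow_one] at h5
    have h4' : (1 : K) - qv ^ n * qv ≠ 0 := by rwa [mul_comm]
    have h5' : (1 : K) - qv * Qv ≠ 0 := by rwa [mul_comm]
    have h3' : qPoch (qv ^ 2 * Qv) n ≠ 0 := by rwa [mul_comm]
    field_simp
    ring

lemma hII : θν1 = PowerSeries.C (Qv * qv) * rescale qv θν1
    + PowerSeries.C (1 - Qv * qv) * rescale qv θν := by
  ext n
  simp only [map_add, coeff_C_mul, coeff_rescale, θν, θν1, coeff_mk]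
  have h1 := qPoch_q_ne n
  have h2 := qPoch_Qq_ne n
  have h3 := qPoch_Qq2_ne n
  have hps := poch_shift n
  field_simp
  linear_combination
    (qv ^ (n * (n - 1) / 2) * (1 - qv) ^ (2 * n) * Qv ^ n * qv ^ n) * hps

lemma constθν : constantCoeff θν = 1 := by
  rw [← coeff_zero_eq_constantCoeff_apply]
  simp [θν, coeff_mk, qPoch]

lemma constθν1 : constantCoeff θν1 = 1 := by
  rw [← coeff_zero_eq_constantCoeff_apply]
  simp [θν1, coeff_mk, qPoch]

lemma hFinv : θν * θν⁻¹ = 1 :=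
  PowerSeries.mul_inv_cancel _ (by rw [constθν]; exact one_ne_zero)

lemma hFqinv : rescale qv θν * rescale qv θν⁻¹ = 1 := by
  rw [← map_mul, hFinv, map_one]

lemma hAB : ((1 - Qv * qv) / (Qv * (1 - qv) ^ 2)) * (Qv * (1 - qv) ^ 2 / (1 - Qv * qv)) = 1 := by
  have h1 := one_sub_Qq_ne 1
  rw [pow_one] at h1
  have h2 : Qv * (1 - qv) ^ 2 ≠ 0 := mul_ne_zero Qv_ne (pow_ne_zero _ one_sub_qv_ne)
  field_simp
  exact div_self (mul_ne_zero Qv_ne one_sub_qv_ne)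

lemma hstar :
    PowerSeries.C ((1 - Qv * qv) / (Qv * (1 - qv) ^ 2)) * (θν1 * rescale qv θν)
      = PowerSeries.C ((1 - Qv * qv) / (Qv * (1 - qv) ^ 2) * (Qv * qv))
          * (rescale qv θν1 * θν)
        + PowerSeries.C (Qv * qv) * (PowerSeries.X * (rescale qv θν1 * θν1))
        + PowerSeries.C (1 - Qv * qv) * (PowerSeries.X * (θν1 * rescale qv θν))
        + PowerSeries.C ((1 - Qv * qv) / (Qv * (1 - qv) ^ 2) * (1 - Qv * qv))
            * (θν * rescale qv θν) := by
  have hI' := hI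
  have hII' := hII
  have hab : (PowerSeries.C ((1 - Qv * qv) / (Qv * (1 - qv) ^ 2)))
      * (PowerSeries.C (Qv * (1 - qv) ^ 2 / (1 - Qv * qv))) = 1 := by
    rw [← map_mul, hAB, map_one]
  simp only [map_mul] at hII' ⊢
  linear_combination
    (PowerSeries.C ((1 - Qv * qv) / (Qv * (1 - qv) ^ 2)) * θν + PowerSeries.X * θν1) * hII'
      + (PowerSeries.C ((1 - Qv * qv) / (Qv * (1 - qv) ^ 2)) * θν1) * hI'
      + (PowerSeries.X * θν1 ^ 2) * hab

lemma θν_ne : (θν : PowerSeries K) ≠ 0 := fun h => by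
  have := constθν; rw [h] at this; simp at this

lemma rθν_ne : rescale qv θν ≠ 0 := fun h => by
  have h0 : constantCoeff (rescale qv θν) = 1 := by
    rw [← coeff_zero_eq_constantCoeff_apply, coeff_rescale, pow_zero, one_mul,
      coeff_zero_eq_constantCoeff_apply, constθν]
  rw [h] at h0; simp at h0

lemma hE :
    PowerSeries.C ((1 - Qv * qv) / (Qv * (1 - qv) ^ 2)) * (θν1 * θν⁻¹)
      = PowerSeries.C ((1 - Qv * qv) / (Qv * (1 - qv) ^ 2) * (Qv * qv))
          * rescale qv (θν1 * θν⁻¹)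
        + PowerSeries.C (Qv * qv)
            * (PowerSeries.X * (rescale qv (θν1 * θν⁻¹) * (θν1 * θν⁻¹)))
        + PowerSeries.C (1 - Qv * qv) * (PowerSeries.X * (θν1 * θν⁻¹))
        + PowerSeries.C ((1 - Qv * qv) / (Qv * (1 - qv) ^ 2) * (1 - Qv * qv)) := by
  apply mul_left_cancel₀ (mul_ne_zero θν_ne rθν_ne)
  have hs := hstar
  have h1 := hFinv
  have h2 := hFqinv
  simp only [map_mul] at hs ⊢
  linear_combination hs
    + (PowerSeries.C ((1 - Qv * qv) / (Qv * (1 - qv) ^ 2)) * θν1 * rescale qv θν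
        - PowerSeries.C Qv * PowerSeries.C qv * PowerSeries.X * rescale qv θν1 * θν1
            * (rescale qv θν * rescale qv θν⁻¹)
        - PowerSeries.C (1 - Qv * qv) * PowerSeries.X * θν1 * rescale qv θν) * h1
    + (- PowerSeries.C ((1 - Qv * qv) / (Qv * (1 - qv) ^ 2)) * PowerSeries.C Qv
          * PowerSeries.C qv * rescale qv θν1 * θν
        - PowerSeries.C Qv * PowerSeries.C qv * PowerSeries.X * rescale qv θν1 * θν1) * h2

lemma mu0 : μ 0 = 1 := by
  rw [μ, coeff_zero_eq_constantCoeff_apply, map_mul, constθν1, PowerSeries.constantCoeff_inv,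
    constθν]
  norm_num

lemma hcoeff (n : ℕ) :
    (1 - Qv * qv) / (Qv * (1 - qv) ^ 2) * μ (n + 1)
      = (1 - Qv * qv) / (Qv * (1 - qv) ^ 2) * (Qv * qv) * (qv ^ (n + 1) * μ (n + 1))
        + Qv * qv * ∑ p ∈ antidiagonal n, qv ^ p.1 * μ p.1 * μ p.2
        + (1 - Qv * qv) * μ n := by
  have h := congrArg (PowerSeries.coeff (n + 1)) hE
  simp only [map_add, coeff_C_mul, coeff_succ_X_mul, coeff_rescale, PowerSeries.coeff_C,
    Nat.succ_ne_zero, if_false, add_zero] at h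
  have hm : (PowerSeries.coeff n) (rescale qv (θν1 * θν⁻¹) * (θν1 * θν⁻¹))
      = ∑ p ∈ antidiagonal n, qv ^ p.1 * μ p.1 * μ p.2 := by
    rw [PowerSeries.coeff_mul]
    exact Finset.sum_congr rfl fun p _ => by rw [coeff_rescale]; rfl
  rw [hm] at h
  simp only [μ] at h ⊢
  linear_combination h

lemma sum_Icc_shift (m : ℕ) (f : ℕ → K) :
    ∑ k ∈ Finset.Icc 2 (m + 1), f k = ∑ j ∈ Finset.range m, f (j + 2) := by
  induction m with
  | zero => simp
  | succ p ih =>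
    rw [Finset.sum_Icc_succ_top (by omega : 2 ≤ p + 1 + 1), ih, Finset.sum_range_succ]


/-- Proposition 2.1: the recurrence for the coefficients `μ_n`. -/
theorem mu_recurrence :
    μ 0 = 1 ∧ μ 1 = Qv / (brk 1 * brk 2) ∧
      ∀ n : ℕ, 2 ≤ n →
        Qv⁻¹ * brk 1 * brk (n + 1) * μ n
          = (∑ k ∈ Finset.Icc 2 (n - 1), Qv * qv ^ k * μ (k - 1) * μ (n - k))
            + (1 + Qv * qv ^ n) * μ (n - 1) := by
  have hq1 : (1 : K) - Qv * qv ≠ 0 := by simpa using one_sub_Qq_ne 1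
  have hq2 : (1 : K) - Qv * qv ^ 2 ≠ 0 := one_sub_Qq_ne 2
  have h1q := one_sub_qv_ne
  have hQ := Qv_ne
  refine ⟨mu0, ?_, ?_⟩
  · have h := hcoeff 0
    simp only [Finset.Nat.antidiagonal_zero, Finset.sum_singleton, pow_zero, one_mul, mu0,
      mul_one, pow_one] at h
    rw [brk, brk, pow_one]
    field_simp at h ⊢
    linear_combination h
  · intro n hn
    obtain ⟨m, rfl⟩ : ∃ m, n = m + 2 := ⟨n - 2, by omega⟩
    have h := hcoeff (m + 1)
    rw [Finset.Nat.sum_antidiagonal_eq_sum_range_succ (fun i j => qv ^ i * μ i * μ j)] at h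
    rw [Finset.sum_range_succ, Finset.sum_range_succ'] at h
    simp only [mu0, pow_zero, one_mul, Nat.sub_self, Nat.sub_zero, mul_one] at h
    rw [Finset.sum_congr rfl (fun j (hj : j ∈ Finset.range m) => by
      rw [show m + 1 - (j + 1) = m - j from by omega] :
      ∀ j ∈ Finset.range m, qv ^ (j + 1) * μ (j + 1) * μ (m + 1 - (j + 1))
        = qv ^ (j + 1) * μ (j + 1) * μ (m - j))] at h
    have hT : ∑ k ∈ Finset.Icc 2 (m + 2 - 1), Qv * qv ^ k * μ (k - 1) * μ (m + 2 - k)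
        = Qv * qv * ∑ j ∈ Finset.range m, qv ^ (j + 1) * μ (j + 1) * μ (m - j) := by
      rw [show m + 2 - 1 = m + 1 from rfl, sum_Icc_shift, Finset.mul_sum]
      refine Finset.sum_congr rfl fun j hj => ?_
      rw [show j + 2 - 1 = j + 1 from rfl, show m + 2 - (j + 2) = m - j from by omega]
      ring
    rw [hT, show m + 2 - 1 = m + 1 from rfl, brk, brk, pow_one]
    field_simp at h ⊢
    linear_combination h


end
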